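/- There exists a semigroup S and a subsemigroup T of S such that the complement S \ T has exactly one element, T is hopfian, and S is not hopfian. (Hence hopficity is not in general preserved by finite Rees index extensions.) -/

import Mathlib

/-- A semigroup is *hopfian* if every surjective semigroup endomorphism is injective. -/
def IsHopfian (S : Type*) [Semigroup S] : Prop :=
  ∀ f : S →ₙ* S, Function.Surjective f → Function.Injective f

namespace Hopf

def clamp : ℕ → List ℕ → List ℕ
  | _, [] => []
  | p, a :: t => min a (p+1) :: clamp (min a (p+1)) t

@[simp] lemma clamp_nil (p : ℕ) : clamp p [] = [] := rfl

@[simp] lemma clamp_cons (p a : ℕ) (t : List ℕ) :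
    clamp p (a :: t) = min a (p+1) :: clamp (min a (p+1)) t := rfl

@[simp] lemma clamp_length (p : ℕ) (l : List ℕ) : (clamp p l).length = l.length := by
  induction l generalizing p with
  | nil => rfl
  | cons a t ih => simp [ih]

@[simp] lemma clamp_eq_nil_iff (p : ℕ) (l : List ℕ) : clamp p l = [] ↔ l = [] := by
  cases l <;> simp

lemma clamp_clamp {q r : ℕ} (h : q ≤ r) (l : List ℕ) :
    clamp q (clamp r l) = clamp q l := by
  induction l generalizing q r with
  | nil => rfl
  | cons a t ih =>
      simp only [clamp_cons]
      have h1 : min (min a (r+1)) (q+1) = min a (q+1) := by omega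
      rw [h1, ih (show min a (q+1) ≤ min a (r+1) by omega)]

lemma clamp_append (p : ℕ) (u v : List ℕ) :
    clamp p (u ++ v) = clamp p u ++ clamp ((clamp p u).getLastD p) v := by
  induction u generalizing p with
  | nil => simp
  | cons a t ih =>
      simp only [List.cons_append, clamp_cons, List.getLastD_cons]
      rw [ih]

lemma getLastD_append (u v : List ℕ) (d : ℕ) :
    (u ++ v).getLastD d = v.getLastD (u.getLastD d) := by
  induction u generalizing d with
  | nil => rfl
  | cons a t ih =>
      rw [List.cons_append, List.getLastD_cons, List.getLastD_cons, ih]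

lemma getLastD_irrel {l : List ℕ} (h : l ≠ []) (d d' : ℕ) :
    l.getLastD d = l.getLastD d' := by
  cases l with
  | nil => exact absurd rfl h
  | cons a t => rw [List.getLastD_cons, List.getLastD_cons]

lemma getLastD_mem {l : List ℕ} (h : l ≠ []) (d : ℕ) : l.getLastD d ∈ l := by
  induction l generalizing d with
  | nil => exact absurd rfl h
  | cons a t ih =>
      cases t with
      | nil => rw [List.getLastD_cons]; simp [List.getLastD]
      | cons b s =>
          rw [List.getLastD_cons]
          exact List.mem_cons_of_mem _ (ih (by simp) _)

lemma clamp_getLastD_le {l : List ℕ} (h : l ≠ []) (p x y : ℕ) :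
    (clamp p l).getLastD x ≤ l.getLastD y := by
  induction l generalizing p x y with
  | nil => exact absurd rfl h
  | cons a t ih =>
      cases t with
      | nil =>
          rw [clamp_cons, clamp_nil, List.getLastD_cons, List.getLastD_cons]
          show min a (p+1) ≤ a
          omega
      | cons b s =>
          rw [clamp_cons, List.getLastD_cons, List.getLastD_cons]
          exact ih (by simp) _ _ _

lemma clamp_chain (p : ℕ) (l : List ℕ) :
    List.Chain (fun a b => b ≤ a + 1) p (clamp p l) := by
  induction l generalizing p with
  | nil => exact List.Chain.nil
  | cons a t ih => exact List.Chain.cons (by omega) (ih _)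

lemma chain_chain' {R : ℕ → ℕ → Prop} : ∀ {p : ℕ} {l : List ℕ},
    List.Chain R p l → List.Chain' R l := by
  intro p l h
  cases l with
  | nil => exact List.IsChain.nil
  | cons a t => exact (List.chain_cons.mp h).2

def Lip (l : List ℕ) : Prop := List.Chain' (fun a b => b ≤ a + 1) l

lemma clamp_eq_self : ∀ (p : ℕ) (l : List ℕ), Lip (p :: l) → clamp p l = l := by
  intro p l h
  induction l generalizing p with
  | nil => rfl
  | cons b t ih =>
      have h1 : b ≤ p + 1 := (List.isChain_cons_cons.mp h).1
      have h2 : Lip (b :: t) := (List.isChain_cons_cons.mp h).2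
      simp only [clamp_cons, min_eq_left h1]
      rw [ih b h2]

def W : Type := {l : List ℕ // l ≠ [] ∧ Lip l}

instance : Mul W :=
  ⟨fun u v => ⟨u.1 ++ clamp (u.1.getLastD 0) v.1, by
    refine ⟨by simp [u.2.1], ?_⟩
    unfold Lip
    rw [List.Chain', List.isChain_append]
    refine ⟨u.2.2, chain_chain' (clamp_chain _ _), ?_⟩
    intro x hx y hy
    have hxp : u.1.getLastD 0 = x := by
      rw [List.getLastD_eq_getLast?, Option.mem_def.mp hx]; rfl
    rcases hv : v.1 with _ | ⟨a, t⟩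
    · rw [hv] at hy; simp at hy
    · rw [hv] at hy
      simp only [clamp_cons, List.head?_cons, Option.mem_def, Option.some.injEq] at hy
      omega⟩⟩

lemma val_mul (u v : W) : (u * v).1 = u.1 ++ clamp (u.1.getLastD 0) v.1 := rfl

instance : Semigroup W where
  mul_assoc := by
    rintro u v w
    apply Subtype.ext
    change (u.1 ++ clamp (u.1.getLastD 0) v.1) ++
        clamp ((u.1 ++ clamp (u.1.getLastD 0) v.1).getLastD 0) w.1 =
      u.1 ++ clamp (u.1.getLastD 0) (v.1 ++ clamp (v.1.getLastD 0) w.1)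
    rw [getLastD_append, clamp_append,
      clamp_clamp (clamp_getLastD_le v.2.1 (u.1.getLastD 0) (u.1.getLastD 0) 0),
      List.append_assoc]

def gen (n : ℕ) : W := ⟨[n], by simp, by constructor⟩

lemma gen_injective : Function.Injective gen := by
  intro a b h
  have h2 : ([a] : List ℕ) = [b] := congrArg (fun w : W => w.1) h
  simpa using h2

lemma length_mul (u v : W) : (u * v).1.length = u.1.length + v.1.length := by
  simp [val_mul]

lemma length_pos (u : W) : 1 ≤ u.1.length := List.length_pos_iff.2 u.2.1

lemma gen_mul_gen (a b : ℕ) : (gen a * gen b).1 = [a, min b (a+1)] := by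
  rw [val_mul]; rfl

lemma mul_gen (u : W) (b : ℕ) :
    (u * gen b).1 = u.1 ++ [min b (u.1.getLastD 0 + 1)] := by
  rw [val_mul]; rfl

lemma eq_gen_of_length_one {u : W} (h : u.1.length = 1) : u = gen (u.1.getLastD 0) := by
  apply Subtype.ext
  rcases hu : u.1 with _ | ⟨a, t⟩
  · exact absurd hu u.2.1
  · rcases t with _ | ⟨b, s⟩
    · rfl
    · rw [hu] at h; simp at h

lemma lip_tail {a : ℕ} {t : List ℕ} (h : Lip (a :: t)) : Lip t :=
  List.IsChain.tail h

/-- every word of length ≥ 2 decomposes as a product. -/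
lemma decomp {u : W} (h : 2 ≤ u.1.length) :
    ∃ v w : W, u = v * w := by
  rcases hu : u.1 with _ | ⟨a, t⟩
  · exact absurd hu u.2.1
  · have ht : t ≠ [] := by
      intro hh; rw [hu, hh] at h; simp at h
    have hlip : Lip (a :: t) := by rw [← hu]; exact u.2.2
    refine ⟨gen a, ⟨t, ht, lip_tail hlip⟩, ?_⟩
    apply Subtype.ext
    show u.1 = [a] ++ clamp a t
    rw [clamp_eq_self a t hlip, hu]
    rfl

/-- every word is fixed by any endomorphism fixing all generators. -/
lemma fix_of_fix_gen (ψ : W →ₙ* W) (hg : ∀ n, ψ (gen n) = gen n) : ∀ u : W, ψ u = u := by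
  intro u
  rcases u with ⟨l, hne, hlip⟩
  induction l with
  | nil => exact absurd rfl hne
  | cons a t ih =>
      rcases t with _ | ⟨b, s⟩
      · exact hg a
      · have ht : (b :: s : List ℕ) ≠ [] := by simp
        have hdec : @Eq W ⟨a :: b :: s, hne, hlip⟩ (gen a * ⟨b :: s, ht, lip_tail hlip⟩) := by
          apply Subtype.ext
          show (a :: b :: s : List ℕ) = [a] ++ clamp a (b :: s)
          rw [clamp_eq_self a (b :: s) hlip]
          rfl
        rw [hdec]
        exact (map_mul ψ (gen a) _).trans (by rw [hg a, ih ht (lip_tail hlip)])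

lemma exists_gen_pre (ψ : W →ₙ* W) (hs : Function.Surjective ψ) (n : ℕ) :
    ∃ m, ψ (gen m) = gen n := by
  obtain ⟨z, hz⟩ := hs (gen n)
  by_cases h1 : z.1.length = 1
  · exact ⟨z.1.getLastD 0, by rw [← eq_gen_of_length_one h1, hz]⟩
  · have h2 : 2 ≤ z.1.length := by have := length_pos z; omega
    obtain ⟨v, w, rfl⟩ := decomp h2
    rw [map_mul] at hz
    have hlen : (ψ v).1.length + (ψ w).1.length = 1 := by
      have := congrArg (fun u : W => u.1.length) hz
      simpa [length_mul, gen] using this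
    have hv := length_pos (ψ v); have hw := length_pos (ψ w)
    omega

/-- the letter of the image of a generator. -/
def tau (ψ : W →ₙ* W) (j : ℕ) : ℕ := (ψ (gen j)).1.getLastD 0

theorem W_rigid (ψ : W →ₙ* W) (hs : Function.Surjective ψ) : ∀ u : W, ψ u = u := by
  have hrel0 : ∀ j, 1 ≤ j → gen 0 * gen j = gen 0 * gen 1 := by
    intro j hj
    apply Subtype.ext
    rw [gen_mul_gen, gen_mul_gen]
    have h : min j (0+1) = min 1 (0+1) := by omega
    rw [h]
  have h1 : ∀ j, 1 ≤ j → ψ (gen 0) * ψ (gen j) = ψ (gen 0) * ψ (gen 1) := by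
    intro j hj
    rw [← map_mul, ← map_mul, hrel0 j hj]
  have h2 : ∀ j, 1 ≤ j → (ψ (gen j)).1.length = (ψ (gen 1)).1.length := by
    intro j hj
    have := congrArg (fun u : W => u.1.length) (h1 j hj)
    simp only [length_mul] at this
    omega
  have hL : (ψ (gen 1)).1.length = 1 := by
    by_contra hL
    obtain ⟨m0, hm0⟩ := exists_gen_pre ψ hs 0
    obtain ⟨m1, hm1⟩ := exists_gen_pre ψ hs 1
    have key : ∀ m n, ψ (gen m) = gen n → m = 0 := by
      intro m n hmn
      by_contra hne
      have hlen := h2 m (by omega)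
      rw [hmn] at hlen
      exact hL (by simpa [gen] using hlen.symm)
    have e0 : m0 = 0 := key _ _ hm0
    have e1 : m1 = 0 := key _ _ hm1
    rw [e0] at hm0; rw [e1] at hm1
    have : (0 : ℕ) = 1 := gen_injective (hm0.symm.trans hm1)
    omega
  have hτ : ∀ j, 1 ≤ j → ψ (gen j) = gen (tau ψ j) := by
    intro j hj
    exact eq_gen_of_length_one (by rw [h2 j hj]; exact hL)
  have h5 : ∀ j, 1 ≤ j →
      min (tau ψ j) (tau ψ 0 + 1) = min (tau ψ 1) (tau ψ 0 + 1) := by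
    intro j hj
    have heq := h1 j hj
    rw [hτ j hj, hτ 1 (le_refl 1)] at heq
    have hv := congrArg (fun u : W => u.1) heq
    simp only [mul_gen] at hv
    have := List.append_cancel_left hv
    simpa [tau] using this
  have h6 : ∀ n, gen n ≠ ψ (gen 0) → ∃ j, 1 ≤ j ∧ tau ψ j = n := by
    intro n hn
    obtain ⟨m, hm⟩ := exists_gen_pre ψ hs n
    rcases Nat.eq_zero_or_pos m with rfl | hpos
    · exact absurd hm.symm hn
    · refine ⟨m, hpos, ?_⟩
      rw [hτ m hpos] at hm
      exact gen_injective hm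
  have h7 : ∀ B, ∃ j, 1 ≤ j ∧ B < tau ψ j := by
    intro B
    by_cases hc : gen (B+1) = ψ (gen 0)
    · have hc2 : gen (B+2) ≠ ψ (gen 0) := by
        rw [← hc]; intro h; have := gen_injective h; omega
      obtain ⟨j, hj, hjv⟩ := h6 (B+2) hc2
      exact ⟨j, hj, by omega⟩
    · obtain ⟨j, hj, hjv⟩ := h6 (B+1) hc
      exact ⟨j, hj, by omega⟩
  have h8 : ∀ j, 1 ≤ j → tau ψ 0 + 1 ≤ tau ψ j := by
    obtain ⟨j', hj', hbig⟩ := h7 (tau ψ 0)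
    intro j hj
    have e1 := h5 j hj
    have e2 := h5 j' hj'
    omega
  have h9 : ψ (gen 0) = gen 0 := by
    obtain ⟨m, hm⟩ := exists_gen_pre ψ hs 0
    rcases Nat.eq_zero_or_pos m with rfl | hpos
    · exact hm
    · rw [hτ m hpos] at hm
      have := gen_injective hm
      have := h8 m hpos
      omega
  have hlam : tau ψ 0 = 0 := by
    unfold tau
    rw [h9]
    rfl
  have hτpos : ∀ j, 1 ≤ j → 1 ≤ tau ψ j := by
    intro j hj; have := h8 j hj; omega
  have h12 : ∀ n, 1 ≤ n → ∃ j, 1 ≤ j ∧ tau ψ j = n := by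
    intro n hn
    apply h6
    rw [h9]
    intro h
    have := gen_injective h
    omega
  have h11 : ∀ i j, 1 ≤ i → i < j →
      min (tau ψ j) (tau ψ i + 1) = min (tau ψ (i+1)) (tau ψ i + 1) := by
    intro i j hi hij
    have hrel : gen i * gen j = gen i * gen (i+1) := by
      apply Subtype.ext
      rw [gen_mul_gen, gen_mul_gen]
      have e : min j (i+1) = min (i+1) (i+1) := by omega
      rw [e]
    have heq := congrArg ψ hrel
    rw [map_mul, map_mul, hτ i hi, hτ j (by omega), hτ (i+1) (by omega)] at heq
    have hv := congrArg (fun u : W => u.1) heq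
    simp only [gen_mul_gen] at hv
    simpa using hv
  have h13 : ∀ i, 1 ≤ i → ∃ j, i < j ∧ tau ψ i + 1 ≤ tau ψ j := by
    intro i hi
    obtain ⟨j, hj1, hjv⟩ := h12 ((Finset.range (i+1)).sup (tau ψ) + 1) (by omega)
    refine ⟨j, ?_, ?_⟩
    · by_contra hle
      push_neg at hle
      have : tau ψ j ≤ (Finset.range (i+1)).sup (tau ψ) :=
        Finset.le_sup (by simp [Finset.mem_range]; omega)
      omega
    · have : tau ψ i ≤ (Finset.range (i+1)).sup (tau ψ) :=
        Finset.le_sup (by simp [Finset.mem_range])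
      omega
  have h14 : ∀ i j, 1 ≤ i → i < j → tau ψ i + 1 ≤ tau ψ j := by
    intro i j hi hij
    obtain ⟨j0, hj0, hbig⟩ := h13 i hi
    have e0 := h11 i j0 hi hj0
    have e1 := h11 i j hi hij
    omega
  have hge : ∀ n, 1 ≤ n → n ≤ tau ψ n := by
    intro n
    induction n with
    | zero => omega
    | succ k ih =>
        intro _
        rcases Nat.eq_zero_or_pos k with rfl | hk
        · exact hτpos 1 (le_refl 1)
        · have ha := h14 k (k+1) hk (by omega)
          have hb := ih hk
          omega
  have hid : ∀ n, 1 ≤ n → tau ψ n = n := by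
    intro n
    induction n using Nat.strong_induction_on with
    | _ n ih =>
        intro hn
        obtain ⟨j, hj1, hjv⟩ := h12 n hn
        rcases lt_trichotomy j n with h | h | h
        · rw [ih j h hj1] at hjv; omega
        · rw [h] at hjv; exact hjv
        · have ha := h14 n j hn h
          have hb := hge n hn
          omega
  have hgen : ∀ n, ψ (gen n) = gen n := by
    intro n
    rcases Nat.eq_zero_or_pos n with rfl | hn
    · exact h9
    · rw [hτ n hn, hid n hn]
  exact fix_of_fix_gen ψ hgen

/-! ### The semigroup `S`: `W` with a zero adjoined -/

inductive Sx : Type where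
  | zero : Sx
  | w : W → Sx

def smul : Sx → Sx → Sx
  | Sx.zero, _ => Sx.zero
  | _, Sx.zero => Sx.zero
  | Sx.w u, Sx.w v => Sx.w (u * v)

instance : Mul Sx := ⟨smul⟩

@[simp] lemma zero_mul' (x : Sx) : Sx.zero * x = Sx.zero := by cases x <;> rfl
@[simp] lemma mul_zero' (x : Sx) : x * Sx.zero = Sx.zero := by cases x <;> rfl
@[simp] lemma w_mul_w (u v : W) : Sx.w u * Sx.w v = Sx.w (u * v) := rfl

instance : Semigroup Sx where
  mul_assoc := by
    rintro (_ | u) (_ | v) (_ | x) <;> simp [mul_assoc]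

def TT : Subsemigroup Sx where
  carrier := {x | x ≠ Sx.zero}
  mul_mem' := by
    rintro (_ | u) (_ | v) hu hv
    · exact absurd rfl hu
    · exact absurd rfl hu
    · exact absurd rfl hv
    · simp only [w_mul_w]; intro h; exact Sx.noConfusion h

lemma mem_TT (x : Sx) : x ∈ TT ↔ x ≠ Sx.zero := Iff.rfl

lemma compl_TT : ((TT : Set Sx))ᶜ = {Sx.zero} := by
  ext x
  simp [TT, Set.mem_compl_iff]

/-! ### non-hopficity of `Sx` -/

lemma clamp_zero_mem (p : ℕ) (l : List ℕ) : 0 ∈ clamp p l ↔ 0 ∈ l := by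
  induction l generalizing p with
  | nil => simp
  | cons a t ih =>
      simp only [clamp_cons, List.mem_cons, ih]
      constructor
      · rintro (h | h)
        · left; omega
        · right; exact h
      · rintro (h | h)
        · left; omega
        · right; exact h

lemma zero_mem_mul (u v : W) : 0 ∈ (u * v).1 ↔ 0 ∈ u.1 ∨ 0 ∈ v.1 := by
  rw [val_mul, List.mem_append, clamp_zero_mem]

lemma getLastD_map (f : ℕ → ℕ) (l : List ℕ) (d : ℕ) :
    (l.map f).getLastD (f d) = f (l.getLastD d) := by
  induction l generalizing d with
  | nil => rfl
  | cons a t ih => rw [List.map_cons, List.getLastD_cons, List.getLastD_cons, ih]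

lemma clamp_map_pred {l : List ℕ} (hl : ∀ x ∈ l, x ≠ 0) {p : ℕ} (hp : 1 ≤ p) :
    (clamp p l).map (· - 1) = clamp (p - 1) (l.map (· - 1)) := by
  induction l generalizing p with
  | nil => rfl
  | cons a t ih =>
      have ha : a ≠ 0 := hl a List.mem_cons_self
      have hhead : min a (p+1) - 1 = min (a - 1) (p - 1 + 1) := by omega
      simp only [clamp_cons, List.map_cons]
      rw [hhead]
      congr 1
      have h1 : 1 ≤ min a (p+1) := by omega
      rw [ih (fun x hx => hl x (List.mem_cons_of_mem _ hx)) h1, hhead]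

def dec (u : W) : W :=
  ⟨u.1.map (· - 1), by simp [u.2.1], by
    have := u.2.2
    unfold Lip at this ⊢
    rw [List.Chain', List.isChain_map]
    exact List.IsChain.imp (fun a b h => by omega) this⟩

def inc (u : W) : W :=
  ⟨u.1.map (· + 1), by simp [u.2.1], by
    have := u.2.2
    unfold Lip at this ⊢
    rw [List.Chain', List.isChain_map]
    exact List.IsChain.imp (fun a b h => by omega) this⟩

def fS0 : Sx → Sx
  | Sx.zero => Sx.zero
  | Sx.w u => if 0 ∈ u.1 then Sx.zero else Sx.w (dec u)

@[simp] lemma fS0_zero : fS0 Sx.zero = Sx.zero := rfl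
@[simp] lemma fS0_w (u : W) : fS0 (Sx.w u) = if 0 ∈ u.1 then Sx.zero else Sx.w (dec u) := rfl

lemma dec_mul {u v : W} (hu : ¬ 0 ∈ u.1) (hv : ¬ 0 ∈ v.1) :
    dec (u * v) = dec u * dec v := by
  apply Subtype.ext
  rw [val_mul]
  show ((u * v).1.map (· - 1)) = (dec u).1 ++ clamp ((dec u).1.getLastD 0) (dec v).1
  have hpu : 1 ≤ u.1.getLastD 0 := by
    have hmem := getLastD_mem u.2.1 0
    have h2 : u.1.getLastD 0 ≠ 0 := by
      intro h; rw [h] at hmem; exact hu hmem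
    omega
  have hlastmap : (dec u).1.getLastD 0 = u.1.getLastD 0 - 1 := by
    show (u.1.map (· - 1)).getLastD 0 = u.1.getLastD 0 - 1
    have := getLastD_map (· - 1) u.1 0
    simpa using this
  rw [val_mul, List.map_append, hlastmap]
  show (u.1.map (· - 1)) ++ (clamp (u.1.getLastD 0) v.1).map (· - 1) = _
  rw [clamp_map_pred (by intro x hx h; rw [h] at hx; exact hv hx) hpu]
  rfl

lemma fS0_mul (x y : Sx) : fS0 (x * y) = fS0 x * fS0 y := by
  rcases x with _ | u
  · simp
  · rcases y with _ | v
    · simp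
    · simp only [w_mul_w, fS0_w]
      by_cases hu : 0 ∈ u.1
      · have huv : 0 ∈ (u * v).1 := (zero_mem_mul u v).2 (Or.inl hu)
        simp [hu, huv]
      · by_cases hv : 0 ∈ v.1
        · have huv : 0 ∈ (u * v).1 := (zero_mem_mul u v).2 (Or.inr hv)
          simp [hu, hv, huv]
        · have huv : ¬ 0 ∈ (u * v).1 := by
            rw [zero_mem_mul]; tauto
          rw [if_neg hu, if_neg hv, if_neg huv, w_mul_w, dec_mul hu hv]

def fS : Sx →ₙ* Sx where
  toFun := fS0
  map_mul' := fS0_mul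

@[simp] lemma fS_apply (x : Sx) : fS x = fS0 x := rfl

lemma fS_surj : Function.Surjective fS := by
  rintro (_ | u)
  · exact ⟨Sx.zero, rfl⟩
  · refine ⟨Sx.w (inc u), ?_⟩
    rw [fS_apply, fS0_w]
    have h0 : ¬ 0 ∈ (inc u).1 := by
      show ¬ 0 ∈ u.1.map (· + 1)
      simp
    rw [if_neg h0]
    congr 1
    apply Subtype.ext
    show (u.1.map (· + 1)).map (· - 1) = u.1
    rw [List.map_map]
    have h1 : ((· - 1) ∘ (· + 1) : ℕ → ℕ) = id := by
      funext x; simp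
    rw [h1, List.map_id]

lemma Sx_not_hopfian : ¬ IsHopfian Sx := by
  intro h
  have hinj := h fS fS_surj
  have he : fS (Sx.w (gen 0)) = fS Sx.zero := by
    rw [fS_apply, fS_apply, fS0_zero, fS0_w]
    rw [if_pos (by show (0:ℕ) ∈ [0]; simp)]
  exact Sx.noConfusion (hinj he)

/-! ### hopficity of `TT` -/

def eT : W ≃* TT where
  toFun u := ⟨Sx.w u, fun h => Sx.noConfusion h⟩
  invFun x :=
    match x with
    | ⟨Sx.zero, h⟩ => absurd rfl h
    | ⟨Sx.w u, _⟩ => u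
  left_inv u := rfl
  right_inv := by rintro ⟨_ | u, h⟩
                  · exact absurd rfl h
                  · rfl
  map_mul' := by intro u v; rfl

lemma TT_hopfian : IsHopfian TT := by
  intro f hf
  have hψmul : ∀ a b : W, eT.symm (f (eT (a * b))) = eT.symm (f (eT a)) * eT.symm (f (eT b)) := by
    intro a b
    rw [map_mul, map_mul, map_mul]
  let ψ : W →ₙ* W := ⟨fun u => eT.symm (f (eT u)), hψmul⟩
  have hψs : Function.Surjective ψ := by
    intro u
    obtain ⟨x, hx⟩ := hf (eT u)
    refine ⟨eT.symm x, ?_⟩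
    show eT.symm (f (eT (eT.symm x))) = u
    rw [MulEquiv.apply_symm_apply, hx, MulEquiv.symm_apply_apply]
  have hfix : ∀ a : ↥TT, f a = a := by
    intro a
    have h1 : ψ (eT.symm a) = eT.symm a := W_rigid ψ hψs (eT.symm a)
    have h2 : eT.symm (f a) = eT.symm a := by
      have : eT (eT.symm a) = a := MulEquiv.apply_symm_apply _ _
      calc eT.symm (f a) = eT.symm (f (eT (eT.symm a))) := by rw [this]
        _ = ψ (eT.symm a) := rfl
        _ = eT.symm a := h1
    exact eT.symm.injective h2
  intro a b hab
  rw [← hfix a, ← hfix b, hab]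

end Hopf

/-- There exist a semigroup `S` and a subsemigroup `T` such that `S \ T` has exactly one
element, `T` is hopfian, and `S` is not hopfian. -/
theorem stmt_6 : ∃ (S : Type) (_ : Semigroup S) (T : Subsemigroup S),
    (∃ x : S, (T : Set S)ᶜ = {x}) ∧ IsHopfian T ∧ ¬ IsHopfian S := by
  exact ⟨Hopf.Sx, inferInstance, Hopf.TT, ⟨Hopf.Sx.zero, Hopf.compl_TT⟩,
    Hopf.TT_hopfian, Hopf.Sx_not_hopfian⟩
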